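/- Let p be prime, m ≥ 1, and let ã₁,…,ã_p be integers with 0 ≤ ãⱼ < p^m. Suppose every primitive p^m-th root of unity is a root of the polynomial P̃(z) = Σ_{j=1}^{p} z^{ãⱼ}. Then there exists u with 0 ≤ u < p^{m−1} such that the multiset {ã₁,…,ã_p} equals {u, u + p^{m−1}, u + 2p^{m−1}, …, u + (p−1)p^{m−1}}. -/

import Mathlib

open Finset Polynomial

lemma sum_range_mul_split {M : Type*} [AddCommMonoid M] (q n : ℕ) (hq : 0 < q) (f : ℕ → M) :
    ∑ k ∈ Finset.range (q * n), f k
      = ∑ u ∈ Finset.range q, ∑ b ∈ Finset.range n, f (u + q * b) := by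
  rw [← Finset.sum_product']
  exact Finset.sum_nbij' (fun k => (k % q, k / q)) (fun x => x.1 + q * x.2)
    (fun k hk => by
      simp only [Finset.mem_range, Finset.mem_product] at *
      exact ⟨Nat.mod_lt _ hq, Nat.div_lt_of_lt_mul (by omega)⟩)
    (fun x hx => by
      simp only [Finset.mem_range, Finset.mem_product] at *
      calc x.1 + q * x.2 < q + q * x.2 := by omega
        _ = q * (x.2 + 1) := by ring
        _ ≤ q * n := Nat.mul_le_mul_left _ (by omega))
    (fun k _ => by simp [Nat.mod_add_div])
    (fun x hx => by
      simp only [Finset.mem_range, Finset.mem_product] at hx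
      have h1 : (x.1 + q * x.2) % q = x.1 := by
        rw [Nat.add_mul_mod_self_left, Nat.mod_eq_of_lt hx.1]
      have h2 : (x.1 + q * x.2) / q = x.2 := by
        rw [Nat.add_mul_div_left _ _ hq, Nat.div_eq_of_lt hx.1, zero_add]
      simp [h1, h2])
    (fun k _ => by simp [Nat.mod_add_div])

set_option maxHeartbeats 1000000 in
theorem stmt11 (p : ℕ) (hp : p.Prime) (m : ℕ) (hm : 1 ≤ m) (a : Fin p → ℕ)
    (ha : ∀ j, a j < p ^ m)
    (hroot : ∀ z : ℂ, IsPrimitiveRoot z (p ^ m) → ∑ j, z ^ (a j) = 0) :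
    ∃ u < p ^ (m - 1),
      Multiset.map a Finset.univ.val =
        Multiset.map (fun j => u + j * p ^ (m - 1)) (Multiset.range p) := by
  classical
  set q : ℕ := p ^ (m - 1) with hqdef
  have hppos : 0 < p := hp.pos
  have hp1 : 1 < p := hp.one_lt
  have hq : 0 < q := Nat.pow_pos hppos
  have hNq : p ^ m = q * p := by
    rw [hqdef, ← pow_succ]
    congr 1
    omega
  have hN0 : p ^ m ≠ 0 := by positivity
  -- counting function
  set c : ℕ → ℕ := fun k => (Finset.univ.filter fun j => a j = k).card with hcdef
  -- primitive root
  obtain ⟨ζ, hζ⟩ : ∃ z : ℂ, IsPrimitiveRoot z (p ^ m) :=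
    ⟨_, Complex.isPrimitiveRoot_exp _ hN0⟩
  have hsum : ∑ j, ζ ^ (a j) = 0 := hroot ζ hζ
  -- rewrite as a sum over range (p^m) with multiplicities
  have key : ∑ k ∈ Finset.range (p ^ m), (c k : ℂ) * ζ ^ k = 0 := by
    rw [← hsum]
    rw [← Finset.sum_fiberwise_of_maps_to (g := a) (t := Finset.range (p ^ m))
      (fun j _ => Finset.mem_range.mpr (ha j)) (fun j => ζ ^ (a j))]
    refine Finset.sum_congr rfl fun k _ => ?_
    rw [Finset.sum_congr rfl (fun j hj => by
      rw [(Finset.mem_filter.mp hj).2]), Finset.sum_const, nsmul_eq_mul]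
  
  have hmod : ∀ u < q, ∀ b : ℕ, (u + q * b) % q = u := fun u hu b => by
    rw [Nat.add_mul_mod_self_left, Nat.mod_eq_of_lt hu]
  -- split the key sum
  have key2 : ∑ u ∈ Finset.range q, ∑ b ∈ Finset.range p,
      (c (u + q * b) : ℂ) * ζ ^ (u + q * b) = 0 := by
    rw [← sum_range_mul_split q p hq (fun k => (c k : ℂ) * ζ ^ k), ← hNq]
    exact key
  -- geometric sum
  have hη : IsPrimitiveRoot (ζ ^ q) p := hζ.pow (Nat.pos_of_ne_zero hN0) hNq
  have hgeom : ∑ b ∈ Finset.range p, (ζ ^ q) ^ b = 0 := hη.geom_sum_eq_zero hp1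
  -- the difference polynomial
  set d : ℕ → ℚ := fun k => (c k : ℚ) - (c (k % q + q * (p - 1)) : ℚ) with hddef
  set D : Polynomial ℚ := ∑ k ∈ Finset.range (q * (p - 1)), Polynomial.C (d k) * Polynomial.X ^ k
    with hDdef
  have haevalD : Polynomial.aeval ζ D = 0 := by
    rw [hDdef, map_sum]
    simp only [map_mul, Polynomial.aeval_C, map_pow, Polynomial.aeval_X]
    rw [sum_range_mul_split q (p - 1) hq (fun k => (algebraMap ℚ ℂ) (d k) * ζ ^ k)]
    have inner : ∀ u ∈ Finset.range q,
        ∑ b ∈ Finset.range (p - 1), (algebraMap ℚ ℂ) (d (u + q * b)) * ζ ^ (u + q * b)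
          = ∑ b ∈ Finset.range p, (c (u + q * b) : ℂ) * ζ ^ (u + q * b) := by
      intro u hu
      rw [Finset.mem_range] at hu
      have hd' : ∀ b : ℕ, (algebraMap ℚ ℂ) (d (u + q * b))
          = (c (u + q * b) : ℂ) - (c (u + q * (p - 1)) : ℂ) := fun b => by
        rw [hddef]
        push_cast [hmod u hu b]
        ring
      have hlast : ∑ b ∈ Finset.range (p - 1),
            ((c (u + q * b) : ℂ) - (c (u + q * (p - 1)) : ℂ)) * ζ ^ (u + q * b)
          = ∑ b ∈ Finset.range p,
            ((c (u + q * b) : ℂ) - (c (u + q * (p - 1)) : ℂ)) * ζ ^ (u + q * b) := by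
        have hpp : p = (p - 1) + 1 := by omega
        rw [hpp, Finset.sum_range_succ]
        simp
      simp only [hd']
      rw [hlast]
      have expand : ∀ b : ℕ, ((c (u + q * b) : ℂ) - (c (u + q * (p - 1)) : ℂ)) * ζ ^ (u + q * b)
          = (c (u + q * b) : ℂ) * ζ ^ (u + q * b)
            - (c (u + q * (p - 1)) : ℂ) * ζ ^ u * (ζ ^ q) ^ b := fun b => by
        rw [pow_add, pow_mul]
        ring
      simp only [expand]
      rw [Finset.sum_sub_distrib, ← Finset.mul_sum, hgeom, mul_zero, sub_zero]
    rw [Finset.sum_congr rfl inner]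
    exact key2
  -- D = 0
  have hDzero : D = 0 := by
    by_contra hD0
    have hdvd : minpoly ℚ ζ ∣ D := minpoly.dvd ℚ ζ haevalD
    have hmin : Polynomial.cyclotomic (p ^ m) ℚ = minpoly ℚ ζ :=
      Polynomial.cyclotomic_eq_minpoly_rat hζ (Nat.pos_of_ne_zero hN0)
    have hdeg1 : (minpoly ℚ ζ).natDegree = q * (p - 1) := by
      rw [← hmin, Polynomial.natDegree_cyclotomic, Nat.totient_prime_pow hp hm]
    have hle : (minpoly ℚ ζ).natDegree ≤ D.natDegree :=
      Polynomial.natDegree_le_of_dvd hdvd hD0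
    have hDle : D.natDegree ≤ q * (p - 1) - 1 := by
      rw [hDdef]
      refine Polynomial.natDegree_sum_le_of_forall_le _ _ fun k hk => ?_
      rw [Finset.mem_range] at hk
      calc (Polynomial.C (d k) * Polynomial.X ^ k).natDegree
          ≤ (Polynomial.C (d k)).natDegree + (Polynomial.X ^ k : Polynomial ℚ).natDegree :=
            Polynomial.natDegree_mul_le
        _ ≤ k := by simp [Polynomial.natDegree_X_pow]
        _ ≤ q * (p - 1) - 1 := by omega
    have hqp1 : 0 < q * (p - 1) := Nat.mul_pos hq (by omega)
    omega
  -- extract coefficients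
  have hcoeff : ∀ k < q * (p - 1), d k = 0 := by
    intro k hk
    have : D.coeff k = d k := by
      rw [hDdef, Polynomial.finset_sum_coeff]
      simp only [Polynomial.coeff_C_mul, Polynomial.coeff_X_pow]
      rw [Finset.sum_congr rfl (fun i _ => by
        rw [mul_ite, mul_one, mul_zero])]
      rw [Finset.sum_ite_eq (Finset.range (q * (p - 1))) k d]
      simp [Finset.mem_range.mpr hk]
    rw [hDzero] at this
    simpa using this.symm
  have hclass : ∀ u < q, ∀ b < p, c (u + q * b) = c (u + q * (p - 1)) := by
    intro u hu b hb
    rcases eq_or_ne b (p - 1) with h | h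
    · rw [h]
    · have hb' : b < p - 1 := by omega
      have hlt : u + q * b < q * (p - 1) := by
        have hqb : q * (b + 1) = q * b + q := by ring
        calc u + q * b < q * (b + 1) := by omega
          _ ≤ q * (p - 1) := Nat.mul_le_mul_left _ (by omega)
      have := hcoeff _ hlt
      rw [hddef] at this
      simp only [hmod u hu b] at this
      have : (c (u + q * b) : ℚ) = (c (u + q * (p - 1)) : ℚ) := by linarith [this]
      exact_mod_cast this
  -- total count
  set e : ℕ → ℕ := fun u => c (u + q * (p - 1)) with hedef
  have htotal : ∑ u ∈ Finset.range q, e u = 1 := by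
    have h1 : (Finset.univ : Finset (Fin p)).card
        = ∑ k ∈ Finset.range (p ^ m), c k :=
      Finset.card_eq_sum_card_fiberwise (fun j _ => Finset.mem_range.mpr (ha j))
    rw [Finset.card_univ, Fintype.card_fin] at h1
    rw [hNq, sum_range_mul_split q p hq c] at h1
    have h2 : ∀ u ∈ Finset.range q, ∑ b ∈ Finset.range p, c (u + q * b) = p * e u := by
      intro u hu
      rw [Finset.mem_range] at hu
      rw [Finset.sum_congr rfl (fun b hb => hclass u hu b (Finset.mem_range.mp hb))]
      rw [Finset.sum_const, Finset.card_range, smul_eq_mul, hedef]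
    rw [Finset.sum_congr rfl h2, ← Finset.mul_sum] at h1
    have := h1.symm
    nlinarith [this]
  -- find the unique u₀
  obtain ⟨u₀, hu₀mem, hu₀ne⟩ : ∃ u ∈ Finset.range q, e u ≠ 0 :=
    Finset.exists_ne_zero_of_sum_ne_zero (htotal ▸ one_ne_zero)
  have hu₀q : u₀ < q := Finset.mem_range.mp hu₀mem
  have herase : e u₀ + ∑ u ∈ (Finset.range q).erase u₀, e u = 1 := by
    rw [Finset.add_sum_erase _ e hu₀mem, htotal]
  have heu₀ : e u₀ = 1 := by omega
  have hzero : ∀ u < q, u ≠ u₀ → e u = 0 := by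
    intro u hu hne
    have hmem : u ∈ (Finset.range q).erase u₀ :=
      Finset.mem_erase.mpr ⟨hne, Finset.mem_range.mpr hu⟩
    have : ∑ u ∈ (Finset.range q).erase u₀, e u = 0 := by omega
    exact (Finset.sum_eq_zero_iff.mp this) u hmem
  -- characterization of c
  have hc1 : ∀ k, c k = if k < p ^ m ∧ k % q = u₀ then 1 else 0 := by
    intro k
    by_cases hk : k < p ^ m
    · have hkq : k % q < q := Nat.mod_lt _ hq
      have hkd : k / q < p := Nat.div_lt_of_lt_mul (by rw [← hNq]; omega)
      have hrw : c k = e (k % q) := by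
        conv_lhs => rw [← Nat.mod_add_div k q]
        rw [hclass _ hkq _ hkd, hedef]
      by_cases hku : k % q = u₀
      · rw [hrw, hku, heu₀, if_pos ⟨hk, rfl⟩]
      · simp [hku, hrw, hzero _ hkq hku]
    · have : c k = 0 := by
        rw [hcdef]
        simp only [Finset.card_eq_zero]
        refine Finset.filter_eq_empty_iff.mpr fun j _ => ?_
        have := ha j
        omega
      simp [hk, this]
  -- conclusion
  refine ⟨u₀, hu₀q, ?_⟩
  ext k
  have hL : Multiset.count k (Multiset.map a Finset.univ.val) = c k := by
    rw [Multiset.count_map]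
    have hfc : (Multiset.filter (fun j => k = a j) Finset.univ.val)
        = (Multiset.filter (fun j => a j = k) Finset.univ.val) :=
      Multiset.filter_congr (fun x _ => ⟨Eq.symm, Eq.symm⟩)
    rw [hfc, hcdef]
    rfl
  
  rw [hL, hc1 k]
  have hginj : Function.Injective (fun j : ℕ => u₀ + j * q) := by
    intro i j h
    simp only [add_right_inj] at h
    exact Nat.eq_of_mul_eq_mul_right hq h
  by_cases hcond : k < p ^ m ∧ k % q = u₀
  · rw [if_pos hcond]
    have hkd : k / q < p := Nat.div_lt_of_lt_mul (by rw [← hNq]; exact hcond.1)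
    have hb : k = u₀ + (k / q) * q := by
      have := Nat.mod_add_div' k q
      omega
    rw [hb]
    rw [show u₀ + k / q * q = (fun j : ℕ => u₀ + j * q) (k / q) from rfl]
    rw [Multiset.count_map_eq_count' _ _ hginj]
    exact Eq.symm <| Multiset.count_eq_one_of_mem (Multiset.nodup_range p)
      (Multiset.mem_range.mpr hkd)
  · rw [if_neg hcond]
    symm
    rw [Multiset.count_eq_zero]
    intro hmem
    obtain ⟨b, hbmem, hbk⟩ := Multiset.mem_map.mp hmem
    have hbp : b < p := Multiset.mem_range.mp hbmem
    refine hcond ⟨?_, ?_⟩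
    · have h1 : u₀ + b * q < q * p := by
        calc u₀ + b * q < q + b * q := by omega
          _ = (b + 1) * q := by ring
          _ ≤ p * q := Nat.mul_le_mul_right _ (by omega)
          _ = q * p := Nat.mul_comm _ _
      rw [hNq]
      omega
    · rw [← hbk, Nat.add_mul_mod_self_right, Nat.mod_eq_of_lt hu₀q]
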